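/- Let P(λ) = Iλᵐ + A_{m−1}λ^{m−1} + ⋯ + A₁λ + A₀ be a monic n×n quaternion matrix polynomial with block companion matrix C_P ∈ M_{mn}(ℍ), and let P_χ(λ) = Iλᵐ + χ_{A_{m−1}}λ^{m−1} + ⋯ + χ_{A₁}λ + χ_{A₀} be its complex adjoint matrix polynomial with block companion matrix C_{P_χ} ∈ M_{2mn}(ℂ). Then the complex adjoint matrix χ_{C_P} of C_P is similar to C_{P_χ} via a permutation matrix: χ_{C_P} = Q C_{P_χ} Q⁻¹ where Q is the block permutation matrix Q = E₁₁ + E₂₃ + E₃₅ + ⋯ + E_{m,2m−1} + E_{m+1,2} + E_{m+2,4} + ⋯ + E_{2m,2m}, with E_{ij} the 2mn×2mn block matrix (n×n blocks) having identity in block position (i,j) and zeros elsewhere. -/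

import Mathlib

open scoped Quaternion
open Matrix
open Polynomial

noncomputable section

/-- The canonical embedding of the complex numbers into the real quaternions. -/
def Complex.toQuat (z : ℂ) : ℍ[ℝ] := ⟨z.re, z.im, 0, 0⟩

/-- The first complex component of a quaternion: `q = c1 q + (c2 q) * j`. -/
def Quaternion.c1 (q : ℍ[ℝ]) : ℂ := ⟨q.re, q.imI⟩

/-- The second complex component of a quaternion: `q = c1 q + (c2 q) * j`. -/
def Quaternion.c2 (q : ℍ[ℝ]) : ℂ := ⟨q.imJ, q.imK⟩

/-- The complex adjoint matrix `χ_A = [[A₁, A₂], [-conj A₂, conj A₁]]` of a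
quaternion matrix `A = A₁ + A₂ j`. -/
def Matrix.chi {ι : Type*} (A : Matrix ι ι ℍ[ℝ]) : Matrix (ι ⊕ ι) (ι ⊕ ι) ℂ :=
  Matrix.fromBlocks (A.map Quaternion.c1) (A.map Quaternion.c2)
    (-(A.map fun q => starRingEnd ℂ (Quaternion.c2 q)))
    (A.map fun q => starRingEnd ℂ (Quaternion.c1 q))

/-- The block companion matrix of the monic matrix polynomial
`P(λ) = I λ^m + A_{m-1} λ^{m-1} + ⋯ + A₁ λ + A₀`:
all rows of blocks but the last have an identity block on the superdiagonal, and the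
last row of blocks is `(-A₀, -A₁, …, -A_{m-1})`. -/
def companion {m : ℕ} {ι : Type*} [DecidableEq ι] {R : Type*} [Ring R]
    (A : Fin m → Matrix ι ι R) : Matrix (Fin m × ι) (Fin m × ι) R :=
  fun p q =>
    if (p.1 : ℕ) + 1 = m then -(A q.1 p.2 q.2)
    else if (q.1 : ℕ) = (p.1 : ℕ) + 1 then (if p.2 = q.2 then 1 else 0) else 0

/-- The reindexing bijection underlying the block permutation matrix
`Q = E₁₁ + E₂₃ + ⋯ + E_{m,2m-1} + E_{m+1,2} + E_{m+2,4} + ⋯ + E_{2m,2m}`: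
the row block `i` of `χ_{C_P}` (for `i ≤ m`) corresponds to the column block `2i - 1` of
`C_{P_χ}`, and the row block `m + i` corresponds to the column block `2i`. -/
def chiCompanionEquiv {m n : ℕ} :
    (Fin m × Fin n) ⊕ (Fin m × Fin n) ≃ Fin m × (Fin n ⊕ Fin n) where
  toFun x := Sum.elim (fun p => (p.1, Sum.inl p.2)) (fun p => (p.1, Sum.inr p.2)) x
  invFun y := Sum.elim (fun k => Sum.inl (y.1, k)) (fun k => Sum.inr (y.1, k)) y.2
  left_inv := by rintro (⟨i, k⟩ | ⟨i, k⟩) <;> rfl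
  right_inv := by rintro ⟨i, k | k⟩ <;> rfl

/-- The block permutation matrix
`Q = E₁₁ + E₂₃ + ⋯ + E_{m,2m-1} + E_{m+1,2} + E_{m+2,4} + ⋯ + E_{2m,2m}`
(each `E_{ij}` has an `n × n` identity block in block position `(i, j)` and zeros
elsewhere). -/
def permQ {m n : ℕ} :
    Matrix ((Fin m × Fin n) ⊕ (Fin m × Fin n)) (Fin m × (Fin n ⊕ Fin n)) ℂ :=
  fun a b => if chiCompanionEquiv a = b then 1 else 0

@[simp] lemma Quaternion.c1_zero : Quaternion.c1 0 = 0 := rfl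
@[simp] lemma Quaternion.c1_one : Quaternion.c1 1 = 1 := rfl
@[simp] lemma Quaternion.c2_zero : Quaternion.c2 0 = 0 := rfl
@[simp] lemma Quaternion.c2_one : Quaternion.c2 1 = 0 := rfl
@[simp] lemma Quaternion.c1_neg (q : ℍ[ℝ]) : Quaternion.c1 (-q) = -Quaternion.c1 q := rfl
@[simp] lemma Quaternion.c2_neg (q : ℍ[ℝ]) : Quaternion.c2 (-q) = -Quaternion.c2 q := rfl

lemma permQ_mul_apply {m n : ℕ} (M : Matrix (Fin m × (Fin n ⊕ Fin n)) (Fin m × (Fin n ⊕ Fin n)) ℂ)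
    (a b : (Fin m × Fin n) ⊕ (Fin m × Fin n)) :
    (permQ (m := m) (n := n) * M * (permQ (m := m) (n := n))ᵀ) a b
      = M (chiCompanionEquiv a) (chiCompanionEquiv b) := by
  simp [permQ, Matrix.mul_apply, Matrix.transpose_apply, ite_mul, mul_ite,
    Finset.sum_ite_eq, Finset.sum_ite_eq']

/-- Let `P(λ) = I λ^m + A_{m-1} λ^{m-1} + ⋯ + A₀` be a monic quaternion matrix polynomial
with block companion matrix `C_P`, and let `P_χ` be its complex adjoint matrix polynomial
with block companion matrix `C_{P_χ}`. Then `χ_{C_P} = Q * C_{P_χ} * Q⁻¹` where `Q` is the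
block permutation matrix `E₁₁ + E₂₃ + ⋯ + E_{m,2m-1} + E_{m+1,2} + ⋯ + E_{2m,2m}`
(whose inverse is its transpose). -/
theorem chi_companion_similar {m n : ℕ} (A : Fin m → Matrix (Fin n) (Fin n) ℍ[ℝ]) :
    permQ (m := m) (n := n) * (permQ (m := m) (n := n))ᵀ = 1 ∧
    (permQ (m := m) (n := n))ᵀ * permQ (m := m) (n := n) = 1 ∧
    Matrix.chi (companion A) =
      permQ (m := m) (n := n) * companion (fun i => Matrix.chi (A i)) * (permQ (m := m) (n := n))ᵀ := by
  refine ⟨?_, ?_, ?_⟩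
  · ext a b
    simp only [Matrix.mul_apply, Matrix.transpose_apply, permQ]
    rw [← Equiv.sum_comp (chiCompanionEquiv (m := m) (n := n))]
    simp [EmbeddingLike.apply_eq_iff_eq, ite_mul, mul_ite, Finset.sum_ite_eq,
      Matrix.one_apply]
  · ext a b
    simp only [Matrix.mul_apply, Matrix.transpose_apply, permQ]
    rw [← Equiv.sum_comp (chiCompanionEquiv (m := m) (n := n)).symm]
    simp only [Equiv.apply_symm_apply, ite_mul, mul_ite, one_mul, mul_one, zero_mul,
      mul_zero, Finset.sum_ite_eq, Finset.sum_ite_eq', Finset.mem_univ, if_true,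
      Matrix.one_apply]
    exact if_congr eq_comm rfl rfl
  · ext a b
    rw [permQ_mul_apply]
    rcases a with ⟨i, k⟩ | ⟨i, k⟩ <;> rcases b with ⟨j, l⟩ | ⟨j, l⟩ <;>
      simp only [Matrix.chi, companion, chiCompanionEquiv, Equiv.coe_fn_mk, Sum.elim_inl,
        Sum.elim_inr, Matrix.fromBlocks_apply₁₁, Matrix.fromBlocks_apply₁₂,
        Matrix.fromBlocks_apply₂₁, Matrix.fromBlocks_apply₂₂, Matrix.map_apply,
        Matrix.neg_apply] <;>
      split_ifs with h1 h2 h3 <;>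
      simp_all [apply_ite, Prod.ext_iff]
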